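/- Let D ∈ ℝ^{p×p} have singular values σ₁,…,σ_p ∈ [0,1], define R² = (∑_j σ_j²)/p, and let α, α' be independent uniform on the unit ball of ℝ^p. Then E[α(I − DDᵀ)αᵀ + α'(I − DᵀD)α'ᵀ + 2α(D − DDᵀD)α'ᵀ] = (2p/(p+2))(1 − R²). -/

import Mathlib

open Matrix MeasureTheory BigOperators

noncomputable section TDAux

namespace TDAux

variable {p : ℕ}

def ballSet (p : ℕ) : Set (Fin p → ℝ) := {x | ∑ k : Fin p, (x k) ^ 2 ≤ 1}

def ballMeas (p : ℕ) : Measure (Fin p → ℝ) :=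
  (volume (ballSet p))⁻¹ • volume.restrict (ballSet p)

lemma continuous_sumSq : Continuous fun x : Fin p → ℝ => ∑ k, (x k) ^ 2 :=
  continuous_finset_sum _ fun k _ => (continuous_apply k).pow 2

lemma isClosed_ballSet : IsClosed (ballSet p) :=
  isClosed_le continuous_sumSq continuous_const

lemma measurableSet_ballSet : MeasurableSet (ballSet p) :=
  isClosed_ballSet.measurableSet

lemma isCompact_ballSet : IsCompact (ballSet p) := by
  refine (isCompact_closedBall (0 : Fin p → ℝ) 1).of_isClosed_subset isClosed_ballSet ?_
  intro x hx
  rw [Metric.mem_closedBall, dist_zero_right]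
  refine (pi_norm_le_iff_of_nonneg zero_le_one).2 fun k => ?_
  rw [Real.norm_eq_abs, ← sq_le_one_iff_abs_le_one]
  refine le_trans ?_ hx
  exact Finset.single_le_sum (fun j _ => sq_nonneg (x j)) (Finset.mem_univ k)

def euclidEquiv (p : ℕ) : EuclideanSpace ℝ (Fin p) ≃ᵐ (Fin p → ℝ) :=
  (MeasurableEquiv.toLp 2 (Fin p → ℝ)).symm

lemma euclid_preimage :
    (euclidEquiv p) ⁻¹' (ballSet p) = Metric.closedBall (0 : EuclideanSpace ℝ (Fin p)) 1 := by
  ext x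
  have hx : (euclidEquiv p) x = fun k => x k := rfl
  simp only [Set.mem_preimage, ballSet, Set.mem_setOf_eq, Metric.mem_closedBall,
    dist_zero_right, hx, EuclideanSpace.norm_eq]
  have hnn : 0 ≤ ∑ k, (x k) ^ 2 := Finset.sum_nonneg fun k _ => sq_nonneg _
  constructor
  · intro h
    rw [show (1:ℝ) = Real.sqrt 1 by simp]
    apply Real.sqrt_le_sqrt
    simpa [Real.norm_eq_abs, sq_abs] using h
  · intro h
    have := Real.sq_sqrt (by positivity : (0:ℝ) ≤ ∑ i, ‖x i‖ ^ 2)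
    have h2 : Real.sqrt (∑ i, ‖x i‖ ^ 2) ^ 2 ≤ 1 ^ 2 :=
      pow_le_pow_left₀ (Real.sqrt_nonneg _) h 2
    rw [this, one_pow] at h2
    simpa [Real.norm_eq_abs, sq_abs] using h2

lemma volume_ballSet_eq :
    volume (ballSet p) = volume (Metric.closedBall (0 : EuclideanSpace ℝ (Fin p)) 1) := by
  rw [← (EuclideanSpace.volume_preserving_symm_measurableEquiv_toLp (Fin p)).measure_preimage
    measurableSet_ballSet.nullMeasurableSet]
  rw [show ⇑(MeasurableEquiv.toLp 2 (Fin p → ℝ)).symm ⁻¹' ballSet p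
      = Metric.closedBall (0 : EuclideanSpace ℝ (Fin p)) 1 from euclid_preimage]

lemma volume_ballSet_ne_zero : volume (ballSet p) ≠ 0 := by
  rw [volume_ballSet_eq]
  refine ne_of_gt (lt_of_lt_of_le (Metric.measure_ball_pos (volume : Measure (EuclideanSpace ℝ (Fin p))) 0 one_pos) ?_)
  exact measure_mono Metric.ball_subset_closedBall

lemma volume_ballSet_ne_top : volume (ballSet p) ≠ ⊤ := by
  rw [volume_ballSet_eq]
  exact measure_closedBall_lt_top.ne

instance : IsProbabilityMeasure (ballMeas p) := by
  constructor
  rw [ballMeas, Measure.smul_apply, Measure.restrict_apply MeasurableSet.univ, Set.univ_inter,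
    smul_eq_mul, ENNReal.inv_mul_cancel volume_ballSet_ne_zero volume_ballSet_ne_top]

lemma integrable_ballMeas {f : (Fin p → ℝ) → ℝ} (hf : Continuous f) :
    Integrable f (ballMeas p) := by
  refine Integrable.smul_measure ?_ (ENNReal.inv_ne_top.2 volume_ballSet_ne_zero)
  exact hf.continuousOn.integrableOn_compact isCompact_ballSet

lemma integral_comp_equiv (e : (Fin p → ℝ) ≃ᵐ (Fin p → ℝ))
    (he : MeasurePreserving e volume volume) (hS : e ⁻¹' ballSet p = ballSet p)
    (f : (Fin p → ℝ) → ℝ) :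
    ∫ x, f (e x) ∂ballMeas p = ∫ x, f x ∂ballMeas p := by
  rw [ballMeas, integral_smul_measure, integral_smul_measure]
  congr 1
  have h := he.restrict_preimage (measurableSet_ballSet (p := p))
  rw [hS] at h
  exact h.integral_comp e.measurableEmbedding f


lemma moment_one (i : Fin p) : ∫ x, x i ∂ballMeas p = 0 := by
  set e : (Fin p → ℝ) ≃ᵐ (Fin p → ℝ) :=
    MeasurableEquiv.piCongrRight (fun _ : Fin p => MeasurableEquiv.neg ℝ) with he_def
  have hcoe : ∀ (x : Fin p → ℝ) (k : Fin p), e x k = -(x k) := fun _ _ => rfl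
  have he : MeasurePreserving e volume volume := by
    refine ⟨e.measurable, ?_⟩
    exact (volume_preserving_pi
      (fun _ : Fin p => Measure.measurePreserving_neg (volume : Measure ℝ))).map_eq
  have hS : e ⁻¹' ballSet p = ballSet p := by
    ext x
    simp only [Set.mem_preimage, ballSet, Set.mem_setOf_eq, hcoe, neg_sq]
  have h := integral_comp_equiv e he hS (fun x => x i)
  simp only [hcoe] at h
  rw [integral_neg] at h
  linarith

lemma moment_offdiag {i j : Fin p} (hij : i ≠ j) :
    ∫ x, x i * x j ∂ballMeas p = 0 := by
  classical
  set e : (Fin p → ℝ) ≃ᵐ (Fin p → ℝ) :=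
    MeasurableEquiv.piCongrRight
      (fun k : Fin p => if k = i then MeasurableEquiv.neg ℝ else MeasurableEquiv.refl ℝ)
    with he_def
  have hcoe : ∀ (x : Fin p → ℝ) (k : Fin p), e x k = if k = i then -(x k) else x k := by
    intro x k
    show (if k = i then MeasurableEquiv.neg ℝ else MeasurableEquiv.refl ℝ) (x k) = _
    split_ifs <;> rfl
  have he : MeasurePreserving e volume volume := by
    refine ⟨e.measurable, ?_⟩
    have : ∀ k : Fin p, MeasurePreserving
        (⇑(if k = i then MeasurableEquiv.neg ℝ else MeasurableEquiv.refl ℝ))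
        (volume : Measure ℝ) (volume : Measure ℝ) := by
      intro k
      split_ifs
      · exact Measure.measurePreserving_neg _
      · exact MeasurePreserving.id _
    exact (volume_preserving_pi this).map_eq
  have hS : e ⁻¹' ballSet p = ballSet p := by
    ext x
    simp only [Set.mem_preimage, ballSet, Set.mem_setOf_eq, hcoe]
    constructor <;> intro h <;> refine le_trans (le_of_eq (Finset.sum_congr rfl fun k _ => ?_)) h
    · split_ifs <;> ring
    · split_ifs <;> ring
  have h := integral_comp_equiv e he hS (fun x => x i * x j)
  simp only [hcoe, eq_self_iff_true, if_true, if_neg (Ne.symm hij), neg_mul] at h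
  rw [integral_neg] at h
  linarith

lemma moment_sq_eq (i j : Fin p) :
    ∫ x, (x i) ^ 2 ∂ballMeas p = ∫ x, (x j) ^ 2 ∂ballMeas p := by
  set e : (Fin p → ℝ) ≃ᵐ (Fin p → ℝ) :=
    MeasurableEquiv.arrowCongr' (Equiv.swap i j) (MeasurableEquiv.refl ℝ) with he_def
  have hcoe : ∀ (x : Fin p → ℝ) (k : Fin p), e x k = x (Equiv.swap i j k) := by
    intro x k
    show x ((Equiv.swap i j).symm k) = x (Equiv.swap i j k)
    rw [Equiv.symm_swap]
  have he : MeasurePreserving e volume volume :=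
    volume_preserving_arrowCongr' _ _ (MeasurePreserving.id _)
  have hS : e ⁻¹' ballSet p = ballSet p := by
    ext x
    simp only [Set.mem_preimage, ballSet, Set.mem_setOf_eq, hcoe]
    rw [Equiv.sum_comp (Equiv.swap i j) (fun k => (x k) ^ 2)]
  have h := integral_comp_equiv e he hS (fun x => (x i) ^ 2)
  simp only [hcoe, Equiv.swap_apply_left] at h
  exact h.symm

lemma setIntegral_sumSq (hp : 0 < p) :
    ∫ x in ballSet p, (∑ k, (x k) ^ 2) ∂volume
      = ((p : ℝ) / ((p : ℝ) + 2)) * (volume (ballSet p)).toReal := by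
  haveI : Nontrivial (EuclideanSpace ℝ (Fin p)) :=
    Module.nontrivial_of_finrank_pos (R := ℝ) (by rw [finrank_euclideanSpace_fin]; exact hp)
  have hφ : MeasurePreserving (euclidEquiv p) volume volume :=
    EuclideanSpace.volume_preserving_symm_measurableEquiv_toLp (Fin p)
  have h1 : ∫ y in (euclidEquiv p) ⁻¹' ballSet p,
      (∑ k, ((euclidEquiv p) y k) ^ 2) ∂volume
      = ∫ x in ballSet p, (∑ k, (x k) ^ 2) ∂volume :=
    hφ.setIntegral_preimage_emb (euclidEquiv p).measurableEmbedding
      (fun x : Fin p → ℝ => ∑ k, (x k) ^ 2) (ballSet p)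
  rw [← h1, euclid_preimage]
  have hnorm : ∀ y : EuclideanSpace ℝ (Fin p),
      (∑ k, ((euclidEquiv p) y k) ^ 2) = ‖y‖ ^ 2 := by
    intro y
    rw [EuclideanSpace.norm_eq, Real.sq_sqrt (by positivity)]
    exact Finset.sum_congr rfl fun k _ => by rw [Real.norm_eq_abs, sq_abs]; rfl
  simp only [hnorm]
  set g0 : ℝ → ℝ := Set.indicator (Set.Icc 0 1) (fun t => t ^ 2) with hg0
  have hind : ∀ y : EuclideanSpace ℝ (Fin p),
      Set.indicator (Metric.closedBall 0 1) (fun y => ‖y‖ ^ 2) y = g0 ‖y‖ := by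
    intro y
    simp only [hg0]
    by_cases h : ‖y‖ ≤ 1
    · rw [Set.indicator_of_mem (mem_closedBall_zero_iff.2 h),
        Set.indicator_of_mem (Set.mem_Icc.2 ⟨norm_nonneg _, h⟩)]
    · rw [Set.indicator_of_notMem (fun hc => h (mem_closedBall_zero_iff.1 hc)),
        Set.indicator_of_notMem (fun hc => h (Set.mem_Icc.1 hc).2)]
  rw [← integral_indicator Metric.isClosed_closedBall.measurableSet]
  simp only [hind]
  rw [integral_fun_norm_addHaar volume g0, finrank_euclideanSpace_fin]
  have key : ∫ y in Set.Ioi (0:ℝ), y ^ (p - 1) • g0 y = 1 / ((p : ℝ) + 2) := by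
    have h2 : ∀ y : ℝ, y ^ (p - 1) • g0 y
        = Set.indicator (Set.Icc (0:ℝ) 1) (fun t => t ^ (p - 1) * t ^ 2) y := by
      intro y
      simp only [hg0, smul_eq_mul]
      by_cases h : y ∈ Set.Icc (0:ℝ) 1
      · rw [Set.indicator_of_mem h, Set.indicator_of_mem h]
      · rw [Set.indicator_of_notMem h, Set.indicator_of_notMem h, mul_zero]
    simp only [h2]
    rw [setIntegral_indicator measurableSet_Icc]
    have hset : Set.Ioi (0:ℝ) ∩ Set.Icc 0 1 = Set.Ioc 0 1 := by
      ext t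
      simp only [Set.mem_inter_iff, Set.mem_Ioi, Set.mem_Icc, Set.mem_Ioc]
      constructor
      · rintro ⟨h1, _, h3⟩; exact ⟨h1, h3⟩
      · rintro ⟨h1, h2⟩; exact ⟨h1, le_of_lt h1, h2⟩
    rw [hset,
      setIntegral_congr_fun measurableSet_Ioc
        (g := fun t : ℝ => t ^ (p + 1)) (fun t _ => by rw [← pow_add]; congr 1; omega),
      ← intervalIntegral.integral_of_le zero_le_one, integral_pow]
    rw [one_pow, zero_pow (by omega : p + 1 + 1 ≠ 0)]
    push_cast
    ring
  rw [key]
  have hb : volume (Metric.ball (0 : EuclideanSpace ℝ (Fin p)) 1) = volume (ballSet p) := by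
    rw [volume_ballSet_eq, Measure.addHaar_closedBall_eq_addHaar_ball]
  rw [Measure.real, hb, nsmul_eq_mul, smul_eq_mul]
  ring

lemma moment_sq (hp : 0 < p) (i : Fin p) :
    ∫ x, (x i) ^ 2 ∂ballMeas p = 1 / ((p : ℝ) + 2) := by
  have hc : (volume (ballSet p)).toReal ≠ 0 :=
    ENNReal.toReal_ne_zero.2 ⟨volume_ballSet_ne_zero, volume_ballSet_ne_top⟩
  have hsum : ∫ x, (∑ k, (x k) ^ 2) ∂ballMeas p = (p : ℝ) / ((p : ℝ) + 2) := by
    rw [ballMeas, integral_smul_measure, setIntegral_sumSq hp, ENNReal.toReal_inv, smul_eq_mul]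
    field_simp
  rw [integral_finset_sum _ (f := fun k x => (x k) ^ 2) (fun k _ => integrable_ballMeas ((continuous_apply k).pow 2))] at hsum
  have hall : ∀ k : Fin p, ∫ x, (x k) ^ 2 ∂ballMeas p = ∫ x, (x i) ^ 2 ∂ballMeas p :=
    fun k => moment_sq_eq k i
  rw [Finset.sum_congr rfl (fun k _ => hall k), Finset.sum_const, Finset.card_univ,
    Fintype.card_fin, nsmul_eq_mul] at hsum
  have hp' : (p : ℝ) ≠ 0 := Nat.cast_ne_zero.2 hp.ne'
  have hp2 : (p : ℝ) + 2 ≠ 0 := by positivity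
  field_simp at hsum
  have h4 := mul_left_cancel₀ hp'
    (by ring_nf at hsum ⊢; linear_combination (p : ℝ) * hsum :
      (p : ℝ) * ((∫ x, (x i) ^ 2 ∂ballMeas p) * ((p : ℝ) + 2)) = (p : ℝ) * 1)
  field_simp
  linarith

lemma quad_expand (M : Matrix (Fin p) (Fin p) ℝ) (x y : Fin p → ℝ) :
    x ⬝ᵥ (M *ᵥ y) = ∑ i, ∑ j, M i j * (x i * y j) := by
  simp only [dotProduct, mulVec, Finset.mul_sum]
  exact Finset.sum_congr rfl fun i _ => Finset.sum_congr rfl fun j _ => by ring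

lemma cross_expand (M : Matrix (Fin p) (Fin p) ℝ) (x y : Fin p → ℝ) :
    x ⬝ᵥ (M *ᵥ y) = ∑ j, (∑ i, M i j * x i) * y j := by
  rw [quad_expand, Finset.sum_comm]
  refine Finset.sum_congr rfl fun j _ => ?_
  rw [Finset.sum_mul]
  exact Finset.sum_congr rfl fun i _ => by ring

lemma contQuad (M : Matrix (Fin p) (Fin p) ℝ) :
    Continuous fun x : Fin p → ℝ => x ⬝ᵥ (M *ᵥ x) := by
  simp only [quad_expand]
  exact continuous_finset_sum _ fun i _ => continuous_finset_sum _ fun j _ =>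
    continuous_const.mul ((continuous_apply i).mul (continuous_apply j))

lemma integral_lin (w : Fin p → ℝ) :
    ∫ x, (∑ j, w j * x j) ∂ballMeas p = 0 := by
  rw [integral_finset_sum _ (f := fun j (x : Fin p → ℝ) => w j * x j) (fun j _ =>
    (integrable_ballMeas (f := fun x => w j * x j) (continuous_const.mul (continuous_apply j))))]
  simp only [integral_const_mul, moment_one, mul_zero, Finset.sum_const_zero]

lemma integral_quad (hp : 0 < p) (M : Matrix (Fin p) (Fin p) ℝ) :
    ∫ x, x ⬝ᵥ (M *ᵥ x) ∂ballMeas p = (∑ i, M i i) / ((p : ℝ) + 2) := by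
  have hterm : ∀ i j : Fin p, ∫ x, M i j * (x i * x j) ∂ballMeas p
      = if j = i then M i i * (1 / ((p : ℝ) + 2)) else 0 := by
    intro i j
    rw [integral_const_mul]
    by_cases h : j = i
    · subst h
      rw [if_pos rfl,
        show (fun x : Fin p → ℝ => x j * x j) = fun x => (x j) ^ 2 by funext x; ring,
        moment_sq hp j]
    · rw [if_neg h, moment_offdiag (fun hij => h hij.symm), mul_zero]
  simp only [quad_expand]
  rw [integral_finset_sum _ (f := fun i x => ∑ j, M i j * (x i * x j)) (fun i _ => integrable_ballMeas (continuous_finset_sum _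
    fun j _ => continuous_const.mul ((continuous_apply i).mul (continuous_apply j))))]
  have : ∀ i : Fin p, ∫ x, (∑ j, M i j * (x i * x j)) ∂ballMeas p
      = M i i * (1 / ((p : ℝ) + 2)) := by
    intro i
    rw [integral_finset_sum _ (f := fun j x => M i j * (x i * x j)) (fun j _ => integrable_ballMeas
      (continuous_const.mul ((continuous_apply i).mul (continuous_apply j))))]
    simp only [hterm]
    simp [Finset.sum_ite_eq']
  rw [Finset.sum_congr rfl fun i _ => this i, ← Finset.sum_mul]
  ring

lemma trace_eq_diag_sum (M : Matrix (Fin p) (Fin p) ℝ) :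
    Matrix.trace M = ∑ i, M i i := rfl

end TDAux
end TDAux

open TDAux in
/-- Theorem 4, case `p = p'`: the expected TD quadratic form over
uniformly random tasks equals `(2p/(p+2))(1 − R²)` with `R² = (∑σ_j²)/p`. -/
theorem expected_td_quadform_eq_cca (p : ℕ)
    (D : Matrix (Fin p) (Fin p) ℝ)
    (U V : Matrix (Fin p) (Fin p) ℝ)
    (σ : Fin p → ℝ) (hU : Uᵀ * U = 1) (hV : Vᵀ * V = 1)
    (hσ : ∀ j, σ j ∈ Set.Icc (0 : ℝ) 1)
    (hD : D = U * Matrix.diagonal σ * Vᵀ)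
    (R2 : ℝ) (hR2 : R2 = (∑ j : Fin p, (σ j) ^ 2) / p) :
    (∫ α : Fin p → ℝ,
      ∫ α' : Fin p → ℝ,
        (α ⬝ᵥ (((1 : Matrix (Fin p) (Fin p) ℝ) - D * Dᵀ) *ᵥ α)
          + α' ⬝ᵥ (((1 : Matrix (Fin p) (Fin p) ℝ) - Dᵀ * D) *ᵥ α')
          + 2 * (α ⬝ᵥ ((D - D * Dᵀ * D) *ᵥ α')))
      ∂((volume {x : Fin p → ℝ | ∑ k : Fin p, (x k) ^ 2 ≤ 1})⁻¹ •
          volume.restrict {x : Fin p → ℝ | ∑ k : Fin p, (x k) ^ 2 ≤ 1})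
      ∂((volume {x : Fin p → ℝ | ∑ j : Fin p, (x j) ^ 2 ≤ 1})⁻¹ •
          volume.restrict {x : Fin p → ℝ | ∑ j : Fin p, (x j) ^ 2 ≤ 1}))
    = (2 * (p : ℝ) / ((p : ℝ) + 2)) * (1 - R2) := by
  rcases Nat.eq_zero_or_pos p with hp | hp
  · subst hp
    simp [dotProduct]
  · have hmeq1 : ((volume {x : Fin p → ℝ | ∑ j : Fin p, (x j) ^ 2 ≤ 1})⁻¹ •
        volume.restrict {x : Fin p → ℝ | ∑ j : Fin p, (x j) ^ 2 ≤ 1}) = ballMeas p := rfl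
    rw [hmeq1]
    set A : Matrix (Fin p) (Fin p) ℝ := 1 - D * Dᵀ with hAdef
    set B : Matrix (Fin p) (Fin p) ℝ := 1 - Dᵀ * D with hBdef
    set C : Matrix (Fin p) (Fin p) ℝ := D - D * Dᵀ * D with hCdef
    have hp' : (p : ℝ) ≠ 0 := Nat.cast_ne_zero.2 hp.ne'
    have hp2 : (p : ℝ) + 2 ≠ 0 := by positivity
    -- inner integral
    have hinner : ∀ α : Fin p → ℝ,
        (∫ α', (α ⬝ᵥ (A *ᵥ α) + α' ⬝ᵥ (B *ᵥ α') + 2 * (α ⬝ᵥ (C *ᵥ α'))) ∂ballMeas p)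
          = α ⬝ᵥ (A *ᵥ α) + (∑ i, B i i) / ((p : ℝ) + 2) := by
      intro α
      have hcrossC : Continuous fun α' : Fin p → ℝ => 2 * (α ⬝ᵥ (C *ᵥ α')) := by
        simp only [cross_expand]
        exact continuous_const.mul (continuous_finset_sum _ fun j _ =>
          continuous_const.mul (continuous_apply j))
      rw [integral_add (f := fun α' : Fin p → ℝ => α ⬝ᵥ (A *ᵥ α) + α' ⬝ᵥ (B *ᵥ α'))
          (g := fun α' : Fin p → ℝ => 2 * (α ⬝ᵥ (C *ᵥ α')))
          (((integrable_const _).add (integrable_ballMeas (contQuad B))))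
          (integrable_ballMeas hcrossC),
        integral_add (f := fun _ : Fin p → ℝ => α ⬝ᵥ (A *ᵥ α))
          (g := fun α' : Fin p → ℝ => α' ⬝ᵥ (B *ᵥ α'))
          (integrable_const _) (integrable_ballMeas (contQuad B)),
        integral_const, integral_quad hp B]
      have hcross0 : ∫ α', 2 * (α ⬝ᵥ (C *ᵥ α')) ∂ballMeas p = 0 := by
        rw [integral_const_mul,
          show (fun α' : Fin p → ℝ => α ⬝ᵥ (C *ᵥ α'))
            = fun α' => ∑ j, (∑ i, C i j * α i) * α' j from funext fun α' => cross_expand C α α',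
          integral_lin, mul_zero]
      rw [hcross0, add_zero]
      simp [measure_univ]
    rw [integral_congr_ae (Filter.Eventually.of_forall hinner),
      integral_add (f := fun α : Fin p → ℝ => α ⬝ᵥ (A *ᵥ α))
        (g := fun _ : Fin p → ℝ => (∑ i, B i i) / ((p : ℝ) + 2))
        (integrable_ballMeas (contQuad A)) (integrable_const _),
      integral_quad hp A, integral_const]
    simp only [measure_univ, ENNReal.toReal_one, probReal_univ, one_smul]
    -- traces
    have hDt : Dᵀ = V * (Matrix.diagonal σ * Uᵀ) := by
      rw [hD]
      simp only [Matrix.transpose_mul, Matrix.diagonal_transpose, Matrix.transpose_transpose,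
        Matrix.mul_assoc]
    have hDDt : D * Dᵀ = U * ((Matrix.diagonal fun j => σ j * σ j) * Uᵀ) := by
      rw [hDt, hD]
      simp only [Matrix.mul_assoc]
      rw [← Matrix.mul_assoc Vᵀ V (Matrix.diagonal σ * Uᵀ), hV, Matrix.one_mul,
        ← Matrix.mul_assoc (Matrix.diagonal σ) (Matrix.diagonal σ) Uᵀ,
        Matrix.diagonal_mul_diagonal]
    have hDtD : Dᵀ * D = V * ((Matrix.diagonal fun j => σ j * σ j) * Vᵀ) := by
      rw [hDt, hD]
      simp only [Matrix.mul_assoc]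
      rw [← Matrix.mul_assoc Uᵀ U (Matrix.diagonal σ * Vᵀ), hU, Matrix.one_mul,
        ← Matrix.mul_assoc (Matrix.diagonal σ) (Matrix.diagonal σ) Vᵀ,
        Matrix.diagonal_mul_diagonal]
    have htrdg : ∀ (W : Matrix (Fin p) (Fin p) ℝ), Wᵀ * W = 1 →
        Matrix.trace (W * ((Matrix.diagonal fun j => σ j * σ j) * Wᵀ)) = ∑ j, (σ j) ^ 2 := by
      intro W hW
      rw [← Matrix.mul_assoc, Matrix.trace_mul_comm, ← Matrix.mul_assoc, hW, Matrix.one_mul,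
        Matrix.trace_diagonal]
      exact Finset.sum_congr rfl fun j _ => (pow_two (σ j)).symm
    have hdiagA : (∑ i, A i i) = (p : ℝ) - ∑ j, (σ j) ^ 2 := by
      rw [← trace_eq_diag_sum, hAdef, Matrix.trace_sub, Matrix.trace_one, hDDt, htrdg U hU]
      simp
    have hdiagB : (∑ i, B i i) = (p : ℝ) - ∑ j, (σ j) ^ 2 := by
      rw [← trace_eq_diag_sum, hBdef, Matrix.trace_sub, Matrix.trace_one, hDtD, htrdg V hV]
      simp
    rw [hdiagA, hdiagB, hR2]
    field_simp
    ring
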